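/- Let (d_m) be a sequence of metrics on ℝ², each inducing the standard topology, such that d_m(x,y) → |x - y| locally uniformly in x, y. For each m, let [x,y]_m denote a minimizing d_m-geodesic segment between x and y (assumed to exist and be unique). Then [x,y]_m converges to the Euclidean segment [x,y] in the Hausdorff metric, locally uniformly in x, y: the point on [x,y]_m at d_m-distance λ·d_m(x,y) from x converges to x + λ(y - x), uniformly in λ ∈ [0,1]. -/

import Mathlib

open Set

lemma key_convexity {u v : EuclideanSpace ℝ (Fin 2)} {lam L δ : ℝ}
    (hl0 : 0 ≤ lam) (hl1 : lam ≤ 1) (hδ : 0 ≤ δ)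
    (hL : ‖u + v‖ = L) (hu : ‖u‖ ≤ lam * L + δ) (hv : ‖v‖ ≤ (1 - lam) * L + δ) :
    ‖(1 - lam) • u - lam • v‖ ^ 2 ≤ L * δ + δ ^ 2 := by
  have hL0 : 0 ≤ L := hL ▸ norm_nonneg _
  have e1 : ‖(1 - lam) • u - lam • v‖ ^ 2
      = (1 - lam) ^ 2 * ‖u‖ ^ 2 - 2 * ((1 - lam) * lam) * (inner ℝ u v : ℝ)
        + lam ^ 2 * ‖v‖ ^ 2 := by
    rw [@norm_sub_sq_real, real_inner_smul_left, real_inner_smul_right,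
      norm_smul, norm_smul, Real.norm_eq_abs, Real.norm_eq_abs, mul_pow, mul_pow,
      sq_abs, sq_abs]
    ring
  have e2 : L ^ 2 = ‖u‖ ^ 2 + 2 * (inner ℝ u v : ℝ) + ‖v‖ ^ 2 := by
    rw [← hL, @norm_add_sq_real]
  have pa : ‖u‖ ^ 2 ≤ (lam * L + δ) ^ 2 := pow_le_pow_left₀ (norm_nonneg u) hu 2
  have pb : ‖v‖ ^ 2 ≤ ((1 - lam) * L + δ) ^ 2 := pow_le_pow_left₀ (norm_nonneg v) hv 2
  rw [e1]
  nlinarith [sq_nonneg (2 * lam - 1), mul_nonneg hL0 hδ, hl0, sub_nonneg.2 hl1,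
    mul_nonneg hl0 (sub_nonneg.2 hl1), sq_nonneg δ, pa, pb, e2]

set_option maxHeartbeats 1600000 in
theorem geodesics_converge_to_segments
    (d : ℕ → EuclideanSpace ℝ (Fin 2) → EuclideanSpace ℝ (Fin 2) → ℝ)
    (hsymm : ∀ m x y, d m x y = d m y x)
    (hzero : ∀ m x y, d m x y = 0 ↔ x = y)
    (htri : ∀ m x y z, d m x z ≤ d m x y + d m y z)
    (htop : ∀ (m : ℕ) (s : Set (EuclideanSpace ℝ (Fin 2))),
      IsOpen s ↔ ∀ x ∈ s, ∃ ε > 0, ∀ y, d m x y < ε → y ∈ s)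
    (hconv : ∀ K : Set (EuclideanSpace ℝ (Fin 2) × EuclideanSpace ℝ (Fin 2)),
      IsCompact K → ∀ ε > 0, ∃ N : ℕ, ∀ m ≥ N, ∀ p ∈ K,
        |d m p.1 p.2 - dist p.1 p.2| < ε)
    (γ : ℕ → EuclideanSpace ℝ (Fin 2) → EuclideanSpace ℝ (Fin 2) → ℝ →
      EuclideanSpace ℝ (Fin 2))
    (hgeo : ∀ m x y, γ m x y 0 = x ∧ γ m x y (d m x y) = y ∧
      ∀ s ∈ Icc 0 (d m x y), ∀ t ∈ Icc 0 (d m x y),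
        d m (γ m x y s) (γ m x y t) = |s - t|)
    (huniq : ∀ m x y (γ' : ℝ → EuclideanSpace ℝ (Fin 2)),
      γ' 0 = x → γ' (d m x y) = y →
      (∀ s ∈ Icc 0 (d m x y), ∀ t ∈ Icc 0 (d m x y), d m (γ' s) (γ' t) = |s - t|) →
      ∀ t ∈ Icc 0 (d m x y), γ' t = γ m x y t) :
    ∀ K : Set (EuclideanSpace ℝ (Fin 2) × EuclideanSpace ℝ (Fin 2)),
      IsCompact K → ∀ ε > 0, ∃ N : ℕ, ∀ m ≥ N, ∀ p ∈ K, ∀ lam ∈ Icc (0:ℝ) 1,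
        dist (γ m p.1 p.2 (lam * d m p.1 p.2)) (p.1 + lam • (p.2 - p.1)) < ε := by
  intro K hK ε hε
  -- nonnegativity of d
  have hnn : ∀ m x y, 0 ≤ d m x y := by
    intro m x y
    have h0 : d m x x = 0 := (hzero m x x).mpr rfl
    have h1 := htri m x y x
    rw [hsymm m y x] at h1
    linarith [h1, h0.symm.le]
  -- bound on K
  obtain ⟨r, hr⟩ := hK.isBounded.subset_closedBall 0
  set R₀ : ℝ := max r 0 with hR₀def
  have hR₀ : 0 ≤ R₀ := le_max_right _ _
  have hKb : ∀ p ∈ K, ‖p.1‖ ≤ R₀ ∧ ‖p.2‖ ≤ R₀ := by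
    intro p hp
    have h := hr hp
    rw [Metric.mem_closedBall, Prod.dist_eq] at h
    constructor
    · have := le_trans (le_max_left (dist p.1 (0:EuclideanSpace ℝ (Fin 2)))
        (dist p.2 0)) h
      rw [dist_zero_right] at this
      exact le_trans this (le_max_left _ _)
    · have := le_trans (le_max_right (dist p.1 (0:EuclideanSpace ℝ (Fin 2)))
        (dist p.2 0)) h
      rw [dist_zero_right] at this
      exact le_trans this (le_max_left _ _)
  set R : ℝ := 4 * R₀ + 3 with hRdef
  set B : Set (EuclideanSpace ℝ (Fin 2)) := Metric.closedBall 0 R with hBdef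
  have hBc : IsCompact (B ×ˢ B) :=
    (isCompact_closedBall _ _).prod (isCompact_closedBall _ _)
  clear_value R B
  set δ₀ : ℝ := min 1 (ε ^ 2 / (4 * R₀ + 8)) with hδ₀def
  have hδ₀pos : 0 < δ₀ := by
    apply lt_min one_pos
    positivity
  have hδ₀1 : δ₀ ≤ 1 := min_le_left _ _
  have hδle : δ₀ ≤ ε ^ 2 / (4 * R₀ + 8) := min_le_right _ _
  clear_value δ₀
  obtain ⟨N₁, hN₁⟩ := hconv K hK δ₀ hδ₀pos
  obtain ⟨N₂, hN₂⟩ := hconv (B ×ˢ B) hBc δ₀ hδ₀pos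
  refine ⟨max N₁ N₂, ?_⟩
  intro m hm p hp lam hlam
  obtain ⟨x, y⟩ := p
  dsimp only
  have hm₁ : m ≥ N₁ := le_trans (le_max_left _ _) hm
  have hm₂ : m ≥ N₂ := le_trans (le_max_right _ _) hm
  obtain ⟨hg0, hg1, hgI⟩ := hgeo m x y
  have hxR : ‖x‖ ≤ R₀ := (hKb _ hp).1
  have hyR : ‖y‖ ≤ R₀ := (hKb _ hp).2
  have hL2 : dist x y ≤ 2 * R₀ := by
    calc dist x y ≤ ‖x‖ + ‖y‖ := by
          rw [dist_eq_norm]; exact norm_sub_le _ _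
      _ ≤ 2 * R₀ := by linarith
  have hdm0 : 0 ≤ d m x y := hnn m x y
  have hdmL : |d m x y - dist x y| < δ₀ := hN₁ m hm₁ (x, y) hp
  -- continuity of the geodesic in the standard topology
  have hcont : ContinuousOn (γ m x y) (Icc 0 (d m x y)) := by
    intro t ht
    show Filter.Tendsto _ _ _
    rw [Filter.tendsto_def]
    intro U hU
    obtain ⟨V, hVU, hV, hgtV⟩ := mem_nhds_iff.mp hU
    obtain ⟨ε', hε', hball⟩ := (htop m V).mp hV _ hgtV
    rw [Metric.mem_nhdsWithin_iff]
    refine ⟨ε', hε', fun s hs => ?_⟩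
    apply hVU
    apply hball
    rw [hgI t ht s hs.2]
    have : dist s t < ε' := hs.1
    rw [Real.dist_eq] at this
    rw [abs_sub_comm]
    exact this
  -- escape bound: the geodesic stays in B
  have hesc : ∀ t ∈ Icc 0 (d m x y), ‖γ m x y t‖ ≤ R := by
    intro t ht
    by_contra h
    push_neg at h
    have hsub : Icc 0 t ⊆ Icc 0 (d m x y) := Icc_subset_Icc le_rfl ht.2
    have hcont' : ContinuousOn (fun s => ‖γ m x y s‖) (Icc 0 t) :=
      continuous_norm.comp_continuousOn (hcont.mono hsub)
    have hx0 : ‖γ m x y 0‖ ≤ R₀ := by rw [hg0]; exact hxR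
    have hmem : R ∈ Icc (‖γ m x y 0‖) (‖γ m x y t‖) :=
      ⟨by rw [hg0]; rw [hRdef]; linarith, h.le⟩
    obtain ⟨t₀, ht₀, hw⟩ := intermediate_value_Icc ht.1 hcont' hmem
    replace hw : ‖γ m x y t₀‖ = R := hw
    have ht₀' : t₀ ∈ Icc 0 (d m x y) := hsub ht₀
    set w := γ m x y t₀ with hwdef
    have hdxw : d m x w = t₀ := by
      have h1 := hgI 0 (left_mem_Icc.mpr hdm0) t₀ ht₀'
      rw [hg0] at h1
      rw [h1, abs_sub_comm, sub_zero, abs_of_nonneg ht₀.1]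
    have hwB : w ∈ B := by
      rw [hBdef, Metric.mem_closedBall, dist_zero_right, hw]
    have hxB : x ∈ B := by
      rw [hBdef, Metric.mem_closedBall, dist_zero_right, hRdef]; linarith
    have h2 := hN₂ m hm₂ (x, w) (Set.mk_mem_prod hxB hwB)
    dsimp only at h2
    have h3 : ‖w‖ - ‖x‖ ≤ dist x w := by
      rw [dist_eq_norm, norm_sub_rev]
      exact (norm_sub_norm_le _ _)
    have ht₀dm : t₀ ≤ d m x y := ht₀'.2
    rw [hdxw] at h2
    rw [abs_lt] at h2 hdmL
    rw [hw] at h3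
    rw [hRdef] at h3
    linarith [h2.1, h2.2, hdmL.1, hdmL.2, hδ₀1, hR₀]
  -- the geodesic point
  have hlamdm : lam * d m x y ∈ Icc 0 (d m x y) :=
    ⟨mul_nonneg hlam.1 hdm0, by nlinarith [hlam.2]⟩
  have hdxz : d m x (γ m x y (lam * d m x y)) = lam * d m x y := by
    have h1 := hgI 0 (left_mem_Icc.mpr hdm0) (lam * d m x y) hlamdm
    rw [hg0] at h1
    rw [h1, abs_sub_comm, sub_zero, abs_of_nonneg hlamdm.1]
  have hdzy : d m (γ m x y (lam * d m x y)) y = (1 - lam) * d m x y := by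
    have h1 := hgI (lam * d m x y) hlamdm (d m x y) (right_mem_Icc.mpr hdm0)
    rw [hg1] at h1
    rw [h1, abs_of_nonpos (by nlinarith [hlam.2] : lam * d m x y - d m x y ≤ 0)]
    ring
  have hzB : γ m x y (lam * d m x y) ∈ B := by
    rw [hBdef, Metric.mem_closedBall, dist_zero_right]
    exact hesc _ hlamdm
  set z := γ m x y (lam * d m x y) with hzdef
  clear_value z
  have hxB : x ∈ B := by
    rw [hBdef, Metric.mem_closedBall, dist_zero_right, hRdef]; linarith
  have hyB : y ∈ B := by
    rw [hBdef, Metric.mem_closedBall, dist_zero_right, hRdef]; linarith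
  have h2 := hN₂ m hm₂ (x, z) (Set.mk_mem_prod hxB hzB)
  have h3 := hN₂ m hm₂ (z, y) (Set.mk_mem_prod hzB hyB)
  dsimp only at h2 h3
  rw [hdxz] at h2
  rw [hdzy] at h3
  rw [abs_lt] at h2 h3 hdmL
  -- bounds on the two sides
  have hu' : dist x z ≤ lam * dist x y + 2 * δ₀ := by
    nlinarith [h2.1, h2.2, hdmL.1, hdmL.2, hlam.1, hlam.2, hδ₀pos.le]
  have hv' : dist z y ≤ (1 - lam) * dist x y + 2 * δ₀ := by
    nlinarith [h3.1, h3.2, hdmL.1, hdmL.2, hlam.1, hlam.2, hδ₀pos.le]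
  -- apply the convexity lemma
  have huv : (z - x) + (y - z) = y - x := by abel
  have hLn : ‖(z - x) + (y - z)‖ = dist x y := by
    rw [huv, ← dist_eq_norm, dist_comm]
  have hun : ‖z - x‖ ≤ lam * dist x y + 2 * δ₀ := by
    rw [← dist_eq_norm, dist_comm]; exact hu'
  have hvn : ‖y - z‖ ≤ (1 - lam) * dist x y + 2 * δ₀ := by
    rw [← dist_eq_norm, dist_comm]; exact hv'
  have hkey := key_convexity hlam.1 hlam.2 (by linarith [hδ₀pos.le] : (0:ℝ) ≤ 2 * δ₀)
    hLn hun hvn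
  have heq : z - (x + lam • (y - x)) = (1 - lam) • (z - x) - lam • (y - z) := by
    rw [sub_smul, one_smul, smul_sub, smul_sub, smul_sub]
    abel
  have hsq : dist z (x + lam • (y - x)) ^ 2 ≤ dist x y * (2 * δ₀) + (2 * δ₀) ^ 2 := by
    rw [dist_eq_norm, heq]
    exact hkey
  have hfin : dist x y * (2 * δ₀) + (2 * δ₀) ^ 2 < ε ^ 2 := by
    have hpos : (0:ℝ) < 4 * R₀ + 8 := by linarith
    have h4 : (4 * R₀ + 8) * δ₀ ≤ ε ^ 2 := by
      rw [← le_div_iff₀' hpos] at *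
      exact hδle
    nlinarith [hδ₀pos, hδ₀1, hL2, hR₀]
  exact lt_of_pow_lt_pow_left₀ 2 hε.le (lt_of_le_of_lt hsq hfin)
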